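/- arXiv:2108.11891 — 2 statements merged into one kernel-verified Lean document; each statement's English description precedes it below -/
import Mathlib

section
/- Let α > 0, β > 0 and σ > 0. Then the function x ↦ |exp(-β x (1/σ - 1)) - 1| · (α/x) · exp(-β x) is integrable on (0, ∞), and ∫₀^∞ |exp(-β x (1/σ - 1)) - 1| · (α/x) · exp(-β x) dx ≤ α β |1/σ - 1| + α ((σ/β) exp(-β/σ) + (1/β) exp(-β)). -/
open Real MeasureTheory

lemma exp_neg_integral_Ioi (a : ℝ) {b : ℝ} (hb : 0 < b) :
    ∫ x in Set.Ioi a, exp (-b * x) = exp (-b * a) / b := by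
  have h := integral_comp_mul_left_Ioi (fun x => exp (-x)) a hb
  simp only [smul_eq_mul] at h
  have : (fun x => exp (-(b * x))) = fun x => exp (-b * x) := by
    funext x; ring_nf
  rw [show (∫ x in Set.Ioi a, exp (-b * x)) = ∫ x in Set.Ioi a, exp (-(b * x)) by
    apply setIntegral_congr_fun measurableSet_Ioi; intro x _; ring_nf]
  rw [h, integral_exp_neg_Ioi]
  rw [neg_mul, eq_div_iff hb.ne']
  field_simp

lemma abs_exp_neg_sub_exp_neg_le {a b : ℝ} (ha : 0 ≤ a) (hb : 0 ≤ b) :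
    |exp (-a) - exp (-b)| ≤ |a - b| := by
  have key : ∀ u v : ℝ, 0 ≤ u → u ≤ v → exp (-u) - exp (-v) ≤ v - u := by
    intro u v hu huv
    have h1 : exp (-u) ≤ 1 := exp_le_one_iff.mpr (by linarith)
    have h2 : 1 - (v - u) ≤ exp (-(v - u)) := by
      have := add_one_le_exp (-(v - u)); linarith
    have h3 : exp (-v) = exp (-u) * exp (-(v - u)) := by
      rw [← exp_add]; ring_nf
    have h4 : (0:ℝ) < exp (-u) := exp_pos _
    nlinarith [exp_pos (-(v-u))]
  rcases le_total a b with h | h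
  · rw [abs_of_nonneg (by simp [exp_le_exp]; linarith), abs_of_nonpos (by linarith)]
    have := key a b ha h; linarith
  · rw [abs_of_nonpos (by simp [exp_le_exp]; linarith), abs_of_nonneg (by linarith)]
    have := key b a hb h; linarith

theorem total_variation_integrand_bound (α β σ : ℝ) (hα : 0 < α) (hβ : 0 < β) (hσ : 0 < σ) :
    IntegrableOn
        (fun x : ℝ => |exp (-β * x * (1 / σ - 1)) - 1| * (α / x) * exp (-β * x))
        (Set.Ioi 0) ∧
      ∫ x in Set.Ioi (0:ℝ), |exp (-β * x * (1 / σ - 1)) - 1| * (α / x) * exp (-β * x) ≤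
        α * β * |1 / σ - 1| + α * (σ / β * exp (-β / σ) + 1 / β * exp (-β)) := by
  set f : ℝ → ℝ := fun x => |exp (-β * x * (1 / σ - 1)) - 1| * (α / x) * exp (-β * x) with hf
  -- rewrite of the integrand
  have hrw : ∀ x : ℝ, 0 < x → f x = (α / x) * |exp (-(β / σ) * x) - exp (-β * x)| := by
    intro x hx
    have h1 : |exp (-β * x * (1 / σ - 1)) - 1| * exp (-β * x)
        = |exp (-(β / σ) * x) - exp (-β * x)| := by
      have he : exp (-β * x * (1 / σ - 1)) * exp (-β * x) = exp (-(β / σ) * x) := by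
        rw [← exp_add]; congr 1; field_simp; ring
      rw [show |exp (-β * x * (1 / σ - 1)) - 1| * exp (-β * x)
          = |(exp (-β * x * (1 / σ - 1)) - 1) * exp (-β * x)| from by
        rw [abs_mul, abs_of_pos (exp_pos _)]]
      rw [sub_mul, one_mul, he]
    calc f x = (|exp (-β * x * (1 / σ - 1)) - 1| * exp (-β * x)) * (α / x) := by ring
    _ = (α / x) * |exp (-(β / σ) * x) - exp (-β * x)| := by rw [h1]; ring
  have hmeas : Measurable f := by
    apply Measurable.mul
    apply Measurable.mul
    · exact ((((measurable_const.mul measurable_id).mul measurable_const).exp).sub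
        measurable_const).abs
    · exact measurable_const.div measurable_id
    · exact ((measurable_const.mul measurable_id).exp)
  have hfnonneg : ∀ x : ℝ, x ∈ Set.Ioi (0:ℝ) → 0 ≤ f x := by
    intro x hx
    have hx0 : (0:ℝ) < x := hx
    positivity
  -- pointwise bound on Ioc 0 1
  have hbound1 : ∀ x ∈ Set.Ioc (0:ℝ) 1, f x ≤ α * β * |1 / σ - 1| := by
    intro x hx
    have hx0 : (0:ℝ) < x := hx.1
    rw [hrw x hx.1]
    have h1 : |exp (-(β / σ) * x) - exp (-β * x)| ≤ |β / σ * x - β * x| := by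
      have := abs_exp_neg_sub_exp_neg_le (a := β / σ * x) (b := β * x)
        (by positivity) (by positivity)
      rw [show -(β / σ * x) = -(β / σ) * x by ring, show -(β * x) = -β * x by ring] at this
      exact this
    have h2 : |β / σ * x - β * x| = β * x * |1 / σ - 1| := by
      rw [show β / σ * x - β * x = (β * x) * (1 / σ - 1) by field_simp, abs_mul,
        abs_of_pos (by positivity : (0:ℝ) < β * x)]
    calc (α / x) * |exp (-(β / σ) * x) - exp (-β * x)| ≤ (α / x) * (β * x * |1 / σ - 1|) := by
          apply mul_le_mul_of_nonneg_left _ (by positivity)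
          rw [← h2]; exact h1
    _ = α * β * |1 / σ - 1| := by field_simp
  -- pointwise bound on Ioi 1
  have hbound2 : ∀ x ∈ Set.Ioi (1:ℝ), f x ≤ α * (exp (-(β / σ) * x) + exp (-β * x)) := by
    intro x hx
    have hx1 : (1:ℝ) < x := hx
    have hx0 : (0:ℝ) < x := by linarith
    rw [hrw x hx0]
    have h1 : |exp (-(β / σ) * x) - exp (-β * x)| ≤ exp (-(β / σ) * x) + exp (-β * x) := by
      have := abs_sub (exp (-(β / σ) * x)) (exp (-β * x))
      calc |exp (-(β / σ) * x) - exp (-β * x)| ≤ |exp (-(β / σ) * x)| + |exp (-β * x)| :=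
            abs_sub _ _
      _ = exp (-(β / σ) * x) + exp (-β * x) := by
            rw [abs_of_pos (exp_pos _), abs_of_pos (exp_pos _)]
    have h2 : α / x ≤ α := by
      rw [div_le_iff₀ hx0]; nlinarith
    exact mul_le_mul h2 h1 (abs_nonneg _) hα.le
  -- integrability on pieces
  have hint1 : IntegrableOn f (Set.Ioc (0:ℝ) 1) := by
    apply Integrable.mono' (integrable_const (α * β * |1 / σ - 1|))
      hmeas.aestronglyMeasurable
    filter_upwards [ae_restrict_mem measurableSet_Ioc] with x hx
    rw [Real.norm_eq_abs, abs_of_nonneg (hfnonneg x hx.1)]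
    exact hbound1 x hx
  have hgint : IntegrableOn (fun x => α * (exp (-(β / σ) * x) + exp (-β * x)))
      (Set.Ioi (1:ℝ)) := by
    apply Integrable.const_mul
    exact (exp_neg_integrableOn_Ioi 1 (by positivity)).add (exp_neg_integrableOn_Ioi 1 hβ)
  have hint2 : IntegrableOn f (Set.Ioi (1:ℝ)) := by
    apply Integrable.mono' hgint hmeas.aestronglyMeasurable
    filter_upwards [ae_restrict_mem measurableSet_Ioi] with x hx
    rw [Real.norm_eq_abs, abs_of_nonneg (hfnonneg x (by simp only [Set.mem_Ioi] at hx ⊢; linarith))]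
    exact hbound2 x hx
  have hunion : Set.Ioc (0:ℝ) 1 ∪ Set.Ioi 1 = Set.Ioi 0 :=
    Set.Ioc_union_Ioi_eq_Ioi zero_le_one
  have hint : IntegrableOn f (Set.Ioi (0:ℝ)) := by
    rw [← hunion]
    exact hint1.union hint2
  refine ⟨hint, ?_⟩
  have hsplit : ∫ x in Set.Ioi (0:ℝ), f x
      = (∫ x in Set.Ioc (0:ℝ) 1, f x) + ∫ x in Set.Ioi (1:ℝ), f x := by
    rw [← hunion]
    exact setIntegral_union (Set.Ioc_disjoint_Ioi le_rfl) measurableSet_Ioi hint1 hint2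
  rw [hsplit]
  have hI1 : (∫ x in Set.Ioc (0:ℝ) 1, f x) ≤ α * β * |1 / σ - 1| := by
    calc (∫ x in Set.Ioc (0:ℝ) 1, f x)
        ≤ ∫ _ in Set.Ioc (0:ℝ) 1, α * β * |1 / σ - 1| := by
          apply setIntegral_mono_on hint1 (integrable_const _) measurableSet_Ioc hbound1
    _ = α * β * |1 / σ - 1| := by
          rw [setIntegral_const, Real.volume_real_Ioc]
          simp
  have hI2 : (∫ x in Set.Ioi (1:ℝ), f x)
      ≤ α * (σ / β * exp (-β / σ) + 1 / β * exp (-β)) := by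
    calc (∫ x in Set.Ioi (1:ℝ), f x)
        ≤ ∫ x in Set.Ioi (1:ℝ), α * (exp (-(β / σ) * x) + exp (-β * x)) := by
          apply setIntegral_mono_on hint2 hgint measurableSet_Ioi hbound2
    _ = α * ((∫ x in Set.Ioi (1:ℝ), exp (-(β / σ) * x))
          + ∫ x in Set.Ioi (1:ℝ), exp (-β * x)) := by
          rw [integral_const_mul, integral_add (exp_neg_integrableOn_Ioi 1 (by positivity))
            (exp_neg_integrableOn_Ioi 1 hβ)]
    _ = α * (σ / β * exp (-β / σ) + 1 / β * exp (-β)) := by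
          rw [exp_neg_integral_Ioi 1 (show (0:ℝ) < β / σ by positivity),
            exp_neg_integral_Ioi 1 hβ]
          rw [mul_one, mul_one]
          congr 1
          rw [show -(β / σ) = -β / σ by ring]
          field_simp
  linarith
end

section
/- Let α > 0, β > 0 and σ > 0, and define ỹ(σ, z) = exp(β z (1/σ - 1)) for z > 0. Then the function z ↦ (ỹ(σ,z) log ỹ(σ,z) - ỹ(σ,z) + 1) · (α/z) · exp(-β z / σ) is integrable on (0, ∞), and ∫₀^∞ (ỹ(σ,z) log ỹ(σ,z) - ỹ(σ,z) + 1) · (α/z) · exp(-β z / σ) dz = α (1/σ - 1 + log σ). -/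
open Real MeasureTheory Set

lemma frullani_integrable {a b : ℝ} (ha : 0 < a) (hab : a ≤ b) :
    IntegrableOn (fun z : ℝ => (exp (-(a*z)) - exp (-(b*z))) / z) (Ioi 0) := by
  have hmeas : AEStronglyMeasurable (fun z : ℝ => (exp (-(a*z)) - exp (-(b*z))) / z)
      (volume.restrict (Ioi 0)) := by
    apply ContinuousOn.aestronglyMeasurable _ measurableSet_Ioi
    exact ContinuousOn.div (by fun_prop) continuousOn_id (fun z hz => ne_of_gt hz)
  refine Integrable.mono' (((exp_neg_integrableOn_Ioi 0 ha).const_mul (b - a))) hmeas ?_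
  rw [ae_restrict_iff' measurableSet_Ioi]
  filter_upwards with z hz
  have hz : 0 < z := hz
  have h1 : exp (-(b*z)) ≤ exp (-(a*z)) := by
    apply exp_le_exp.2; nlinarith
  have h2 : exp (-(a*z)) - exp (-(b*z)) ≤ (b - a) * z * exp (-(a*z)) := by
    have : 1 - ((b-a)*z) ≤ exp (-((b-a)*z)) := by
      have := add_one_le_exp (-((b-a)*z)); linarith
    have hmul : exp (-(b*z)) = exp (-(a*z)) * exp (-((b-a)*z)) := by
      rw [← exp_add]; ring_nf
    nlinarith [exp_pos (-(a*z))]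
  rw [Real.norm_eq_abs, abs_of_nonneg (div_nonneg (by linarith) hz.le), div_le_iff₀ hz]
  calc exp (-(a*z)) - exp (-(b*z)) ≤ (b - a) * z * exp (-(a*z)) := h2
    _ = (b - a) * exp (-a * z) * z := by ring

lemma integral_exp_neg_mul_Ioi_zero {b : ℝ} (hb : 0 < b) :
    ∫ z in Set.Ioi (0:ℝ), exp (-(b * z)) = 1 / b := by
  have h := integral_comp_mul_left_Ioi (fun x => exp (-x)) 0 hb
  simp only [mul_zero, smul_eq_mul] at h
  rw [h, integral_exp_neg_Ioi_zero, one_div, mul_one]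

lemma interval_exp_neg_mul {a b z : ℝ} (hz : 0 < z) :
    ∫ t in a..b, exp (-(t * z)) = (exp (-(a*z)) - exp (-(b*z))) / z := by
  have h := intervalIntegral.integral_comp_mul_right (fun x => exp (-x)) hz.ne' (a := a) (b := b)
  rw [h, intervalIntegral.integral_comp_neg (fun x => exp x), integral_exp]
  simp only [neg_neg, smul_eq_mul]
  field_simp

lemma frullani_value {a b : ℝ} (ha : 0 < a) (hab : a ≤ b) :
    ∫ z in Ioi (0:ℝ), (exp (-(a*z)) - exp (-(b*z))) / z = Real.log b - Real.log a := by
  have hb : 0 < b := lt_of_lt_of_le ha hab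
  set F : ℝ × ℝ → ℝ := fun p => exp (-(p.2 * p.1)) with hF
  have hFc : Continuous F := by fun_prop
  have hint : Integrable F ((volume.restrict (Ioi 0)).prod (volume.restrict (Icc a b))) := by
    rw [integrable_prod_iff hFc.aestronglyMeasurable]
    constructor
    · filter_upwards with z
      exact (Continuous.integrableOn_Icc (by fun_prop))
    · apply Integrable.congr (frullani_integrable ha hab)
      rw [Filter.EventuallyEq, ae_restrict_iff' measurableSet_Ioi]
      filter_upwards with z hz
      have : ∀ t, ‖F (z, t)‖ = exp (-(t * z)) := fun t => abs_of_pos (exp_pos _)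
      simp only [this]
      rw [integral_Icc_eq_integral_Ioc, ← intervalIntegral.integral_of_le hab,
        interval_exp_neg_mul hz]
  have swap := integral_integral_swap (f := fun z t => F (z, t)) hint
  have lhs : ∫ z in Ioi (0:ℝ), ∫ t in Icc a b, F (z, t) =
      ∫ z in Ioi (0:ℝ), (exp (-(a*z)) - exp (-(b*z))) / z := by
    apply setIntegral_congr_fun measurableSet_Ioi
    intro z hz
    simp only
    rw [integral_Icc_eq_integral_Ioc, ← intervalIntegral.integral_of_le hab]
    exact interval_exp_neg_mul hz
  have rhs : ∫ t in Icc a b, ∫ z in Ioi (0:ℝ), F (z, t) = Real.log b - Real.log a := by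
    have : ∀ t ∈ Icc a b, (∫ z in Ioi (0:ℝ), F (z, t)) = 1 / t := by
      intro t ht
      exact integral_exp_neg_mul_Ioi_zero (lt_of_lt_of_le ha ht.1)
    rw [setIntegral_congr_fun measurableSet_Icc this,
      integral_Icc_eq_integral_Ioc, ← intervalIntegral.integral_of_le hab,
      integral_one_div, log_div hb.ne' ha.ne']
    rw [uIcc_of_le hab]
    intro h
    exact absurd h.1 (not_le.2 ha)
  rw [← lhs, swap, rhs]

lemma frullani {a b : ℝ} (ha : 0 < a) (hb : 0 < b) :
    IntegrableOn (fun z : ℝ => (exp (-(a*z)) - exp (-(b*z))) / z) (Ioi 0) ∧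
      ∫ z in Ioi (0:ℝ), (exp (-(a*z)) - exp (-(b*z))) / z = Real.log b - Real.log a := by
  rcases le_total a b with h | h
  · exact ⟨frullani_integrable ha h, frullani_value ha h⟩
  · have eqf : (fun z : ℝ => (exp (-(a*z)) - exp (-(b*z))) / z)
        = fun z => -((exp (-(b*z)) - exp (-(a*z))) / z) := by funext z; ring
    rw [eqf]
    exact ⟨(frullani_integrable hb h).neg,
      by rw [integral_neg, frullani_value hb h]; ring⟩

theorem lepingle_memin_integrand_inverse (α β σ : ℝ) (hα : 0 < α) (hβ : 0 < β) (hσ : 0 < σ) :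
    IntegrableOn
        (fun z : ℝ =>
          (exp (β * z * (1 / σ - 1)) * Real.log (exp (β * z * (1 / σ - 1)))
            - exp (β * z * (1 / σ - 1)) + 1) * (α / z) * exp (-β * z / σ))
        (Set.Ioi 0) ∧
      ∫ z in Set.Ioi (0:ℝ),
          (exp (β * z * (1 / σ - 1)) * Real.log (exp (β * z * (1 / σ - 1)))
            - exp (β * z * (1 / σ - 1)) + 1) * (α / z) * exp (-β * z / σ) =
        α * (1 / σ - 1 + Real.log σ) := by
  have hσ0 : σ ≠ 0 := hσ.ne'
  have hbs : 0 < β / σ := div_pos hβ hσ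
  obtain ⟨kint, kval⟩ := frullani hbs hβ
  set c := β * (1 / σ - 1) with hc
  have hexp1 : IntegrableOn (fun z : ℝ => α * c * exp (-(β * z))) (Ioi 0) := by
    have := (exp_neg_integrableOn_Ioi 0 hβ).const_mul (α * c)
    simpa [neg_mul, IntegrableOn] using this
  set g : ℝ → ℝ := fun z =>
    α * c * exp (-(β * z)) + α * ((exp (-(β/σ*z)) - exp (-(β*z))) / z) with hg
  have hgint : IntegrableOn g (Ioi 0) := hexp1.add (kint.const_mul α)
  have heq : Set.EqOn
      (fun z : ℝ =>
          (exp (β * z * (1 / σ - 1)) * Real.log (exp (β * z * (1 / σ - 1)))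
            - exp (β * z * (1 / σ - 1)) + 1) * (α / z) * exp (-β * z / σ)) g (Ioi 0) := by
    intro z hz
    have hz : (0:ℝ) < z := hz
    have hPQ : exp (β * z * (1 / σ - 1)) * exp (-β * z / σ) = exp (-(β * z)) := by
      rw [← exp_add]; congr 1; field_simp; ring
    have hQ : exp (-β * z / σ) = exp (-(β/σ*z)) := by congr 1; field_simp
    simp only [hg, Real.log_exp, ← hPQ, ← hQ, hc]
    field_simp
    ring
  refine ⟨hgint.congr_fun (fun z hz => (heq hz).symm) measurableSet_Ioi, ?_⟩
  rw [setIntegral_congr_fun measurableSet_Ioi heq, hg,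
    integral_add hexp1 (kint.const_mul α), MeasureTheory.integral_const_mul, MeasureTheory.integral_const_mul,
    kval, integral_exp_neg_mul_Ioi_zero hβ, log_div hβ.ne' hσ0, hc]
  field_simp
  ring
end
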